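/- (Cotlar–Stein variant.) Let H be a Hilbert space and let (T_i)_{i∈I} be a finite family of bounded linear operators on H such that: (1) T_i T_{i'}* = 0 whenever i ≠ i'; (2) Σ_{i'∈I} ‖T_i* T_{i'}‖ ≤ C for every i ∈ I, with a constant C independent of i. Then ‖Σ_{i∈I} T_i‖ ≤ C^{1/2}. -/

import Mathlib

open ContinuousLinearMap

/-- Cotlar–Stein variant: if `(T i)` is a finite family of bounded
operators on a Hilbert space with `T i ∘ (T i')* = 0` for `i ≠ i'` and
`∑ i' ‖(T i)* ∘ T i'‖ ≤ C` for every `i`, then `‖∑ i, T i‖ ≤ C ^ (1/2)`. -/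
theorem statement13 {H : Type*} [NormedAddCommGroup H] [InnerProductSpace ℂ H]
    [CompleteSpace H] {ι : Type*} [Fintype ι] (T : ι → H →L[ℂ] H) (C : ℝ)
    (h1 : ∀ i i' : ι, i ≠ i' → T i ∘L ContinuousLinearMap.adjoint (T i') = 0)
    (h2 : ∀ i : ι, ∑ i' : ι, ‖ContinuousLinearMap.adjoint (T i) ∘L T i'‖ ≤ C) :
    ‖∑ i : ι, T i‖ ≤ Real.sqrt C := by
  rcases isEmpty_or_nonempty ι with hι | ⟨⟨i0⟩⟩
  · simp [Real.sqrt_nonneg]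
  have hC : 0 ≤ C :=
    le_trans (Finset.sum_nonneg fun _ _ => norm_nonneg _) (h2 i0)
  haveI : ∀ i, CompleteSpace (LinearMap.ker (T i : H →ₗ[ℂ] H)) := fun i =>
    (ContinuousLinearMap.isClosed_ker (T i)).completeSpace_coe
  -- `ker (T j) = (range (T j)†)ᗮ`
  have hker : ∀ j, LinearMap.ker (T j : H →ₗ[ℂ] H)
      = (LinearMap.range (ContinuousLinearMap.adjoint (T j) : H →ₗ[ℂ] H))ᗮ := by
    intro j
    ext x
    simp only [LinearMap.mem_ker, Submodule.mem_orthogonal, ContinuousLinearMap.coe_coe]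
    constructor
    · rintro hx _ ⟨y, rfl⟩
      rw [ContinuousLinearMap.coe_coe, ContinuousLinearMap.adjoint_inner_left, hx, inner_zero_right]
    · intro hx
      apply ext_inner_left ℂ
      intro y
      rw [inner_zero_right, ← ContinuousLinearMap.adjoint_inner_left]
      exact hx _ ⟨y, rfl⟩
  -- `(ker (T j))ᗮ ⊆ ker (T i)` for `i ≠ j`
  have hsub : ∀ i j, i ≠ j → (LinearMap.ker (T j : H →ₗ[ℂ] H))ᗮ ≤ LinearMap.ker (T i : H →ₗ[ℂ] H) := by
    intro i j hij
    rw [hker j, Submodule.orthogonal_orthogonal_eq_closure]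
    apply Submodule.topologicalClosure_minimal
    · rintro _ ⟨y, rfl⟩
      have := ContinuousLinearMap.ext_iff.mp (h1 i j hij) y
      simpa using this
    · exact ContinuousLinearMap.isClosed_ker (T i)
  refine opNorm_le_bound _ (Real.sqrt_nonneg C) fun x => ?_
  set u : ι → H := fun i => (Submodule.orthogonalProjection (LinearMap.ker (T i : H →ₗ[ℂ] H))ᗮ x : H) with hu
  have humem : ∀ i, u i ∈ (LinearMap.ker (T i : H →ₗ[ℂ] H))ᗮ := fun i => Submodule.coe_mem _
  have hdiff : ∀ i, x - u i ∈ ((LinearMap.ker (T i : H →ₗ[ℂ] H))ᗮ)ᗮ := fun i =>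
    Submodule.sub_starProjection_mem_orthogonal x
  have hTu : ∀ i, T i x = T i (u i) := by
    intro i
    have h0 : x - u i ∈ LinearMap.ker (T i : H →ₗ[ℂ] H) := by
      have := hdiff i
      rwa [Submodule.orthogonal_orthogonal_eq_closure,
        (ContinuousLinearMap.isClosed_ker (T i)).submodule_topologicalClosure_eq] at this
    have : T i (x - u i) = 0 := h0
    rw [map_sub, sub_eq_zero] at this
    exact this
  have horth : ∀ i j, i ≠ j → (inner ℂ (u i) (u j) : ℂ) = 0 := by
    intro i j hij
    exact Submodule.inner_left_of_mem_orthogonal (hsub i j hij (humem j)) (humem i)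
  -- Bessel: `∑ ‖u i‖ ^ 2 ≤ ‖x‖ ^ 2`
  set s : H := ∑ i, u i with hs
  have hss : ‖s‖ ^ 2 = ∑ i, ‖u i‖ ^ 2 := by
    rw [← inner_self_eq_norm_sq (𝕜 := ℂ) s]
    rw [hs, sum_inner, map_sum]
    refine Finset.sum_congr rfl fun i _ => ?_
    rw [inner_sum, Finset.sum_eq_single i]
    · exact inner_self_eq_norm_sq (𝕜 := ℂ) (u i)
    · intro j _ hji
      exact horth i j (Ne.symm hji)
    · intro h; exact absurd (Finset.mem_univ i) h
  have hsx : (∑ i, ‖u i‖ ^ 2 : ℝ) = RCLike.re (inner ℂ s x : ℂ) := by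
    rw [hs, sum_inner, map_sum]
    refine Finset.sum_congr rfl fun i _ => ?_
    have h0 : (inner ℂ (u i) x : ℂ) = inner ℂ (u i) (u i) + inner ℂ (u i) (x - u i) := by
      rw [← inner_add_right, show u i + (x - u i) = x from by abel]
    have hz : (inner ℂ (u i) (x - u i) : ℂ) = 0 :=
      Submodule.inner_right_of_mem_orthogonal (humem i) (hdiff i)
    rw [h0, hz, add_zero, inner_self_eq_norm_sq]
  have hsnorm : ‖s‖ ≤ ‖x‖ := by
    rcases eq_or_lt_of_le (norm_nonneg s) with h0 | h0
    · rw [← h0]; exact norm_nonneg x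
    · have h1' : ‖s‖ ^ 2 ≤ ‖s‖ * ‖x‖ := by
        rw [hss, hsx]
        exact re_inner_le_norm s x
      nlinarith
  have hbessel : (∑ i, ‖u i‖ ^ 2 : ℝ) ≤ ‖x‖ ^ 2 := by
    rw [← hss]; exact pow_le_pow_left₀ (norm_nonneg s) hsnorm 2
  -- main estimate
  set a : ι → ι → ℝ := fun i j => ‖ContinuousLinearMap.adjoint (T i) ∘L T j‖ with ha
  have hcol : ∀ j, (∑ i, a i j) ≤ C := by
    intro j
    calc (∑ i, a i j) = ∑ i, a j i := by
          refine Finset.sum_congr rfl fun i _ => ?_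
          rw [ha]
          dsimp only
          rw [← ContinuousLinearMap.adjoint.norm_map
            (ContinuousLinearMap.adjoint (T i) ∘L T j),
            ContinuousLinearMap.adjoint_comp, ContinuousLinearMap.adjoint_adjoint]
      _ ≤ C := h2 j
  have key : ‖(∑ i, T i) x‖ ^ 2 ≤ C * ‖x‖ ^ 2 := by
    have hSx : (∑ i, T i) x = ∑ i, T i (u i) := by
      rw [ContinuousLinearMap.sum_apply]
      exact Finset.sum_congr rfl fun i _ => hTu i
    rw [hSx]
    have expand : ‖∑ i, T i (u i)‖ ^ 2
        = ∑ i, ∑ j, RCLike.re (inner ℂ (T i (u i)) (T j (u j)) : ℂ) := by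
      rw [← inner_self_eq_norm_sq (𝕜 := ℂ), sum_inner, map_sum]
      refine Finset.sum_congr rfl fun i _ => ?_
      rw [inner_sum, map_sum]
    rw [expand]
    have step1 : ∀ i j, RCLike.re (inner ℂ (T i (u i)) (T j (u j)) : ℂ)
        ≤ a i j * (‖u i‖ * ‖u j‖) := by
      intro i j
      have h0 : (inner ℂ (T i (u i)) (T j (u j)) : ℂ)
          = inner ℂ (u i) ((ContinuousLinearMap.adjoint (T i) ∘L T j) (u j)) := by
        rw [ContinuousLinearMap.comp_apply, ContinuousLinearMap.adjoint_inner_right]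
      rw [h0]
      calc RCLike.re (inner ℂ (u i) ((ContinuousLinearMap.adjoint (T i) ∘L T j) (u j)) : ℂ)
          ≤ ‖u i‖ * ‖(ContinuousLinearMap.adjoint (T i) ∘L T j) (u j)‖ :=
            re_inner_le_norm _ _
        _ ≤ ‖u i‖ * (a i j * ‖u j‖) := by
            apply mul_le_mul_of_nonneg_left (le_opNorm _ _) (norm_nonneg _)
        _ = a i j * (‖u i‖ * ‖u j‖) := by ring
    have hanonneg : ∀ i j, 0 ≤ a i j := fun i j => norm_nonneg _
    calc (∑ i, ∑ j, RCLike.re (inner ℂ (T i (u i)) (T j (u j)) : ℂ))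
        ≤ ∑ i, ∑ j, a i j * (‖u i‖ * ‖u j‖) :=
          Finset.sum_le_sum fun i _ => Finset.sum_le_sum fun j _ => step1 i j
      _ ≤ ∑ i, ∑ j, (a i j * ‖u i‖ ^ 2 / 2 + a i j * ‖u j‖ ^ 2 / 2) := by
          refine Finset.sum_le_sum fun i _ => Finset.sum_le_sum fun j _ => ?_
          nlinarith [sq_nonneg (‖u i‖ - ‖u j‖), hanonneg i j, sq_nonneg (‖u i‖ + ‖u j‖)]
      _ = (∑ i, ∑ j, a i j * ‖u i‖ ^ 2 / 2) + (∑ i, ∑ j, a i j * ‖u j‖ ^ 2 / 2) := by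
          rw [← Finset.sum_add_distrib]
          exact Finset.sum_congr rfl fun i _ => Finset.sum_add_distrib
      _ ≤ (∑ i, C * ‖u i‖ ^ 2 / 2) + (∑ j, C * ‖u j‖ ^ 2 / 2) := by
          apply add_le_add
          · refine Finset.sum_le_sum fun i _ => ?_
            have : (∑ j, a i j * ‖u i‖ ^ 2 / 2) = (∑ j, a i j) * ‖u i‖ ^ 2 / 2 := by
              rw [Finset.sum_mul, Finset.sum_div]
            rw [this]
            have hmul := mul_le_mul_of_nonneg_right (h2 i) (sq_nonneg ‖u i‖)
            rw [ha]
            dsimp only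
            linarith
          · rw [Finset.sum_comm]
            refine Finset.sum_le_sum fun j _ => ?_
            have : (∑ i, a i j * ‖u j‖ ^ 2 / 2) = (∑ i, a i j) * ‖u j‖ ^ 2 / 2 := by
              rw [Finset.sum_mul, Finset.sum_div]
            rw [this]
            have hmul := mul_le_mul_of_nonneg_right (hcol j) (sq_nonneg ‖u j‖)
            linarith
      _ = C * ∑ i, ‖u i‖ ^ 2 := by
          rw [← Finset.sum_add_distrib, Finset.mul_sum]
          exact Finset.sum_congr rfl fun i _ => by ring
      _ ≤ C * ‖x‖ ^ 2 := mul_le_mul_of_nonneg_left hbessel hC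
  have h0 : ‖(∑ i, T i) x‖ = Real.sqrt (‖(∑ i, T i) x‖ ^ 2) :=
    (Real.sqrt_sq (norm_nonneg _)).symm
  rw [h0]
  calc Real.sqrt (‖(∑ i, T i) x‖ ^ 2) ≤ Real.sqrt (C * ‖x‖ ^ 2) :=
        Real.sqrt_le_sqrt key
    _ = Real.sqrt C * ‖x‖ := by
        rw [Real.sqrt_mul hC, Real.sqrt_sq (norm_nonneg _)]
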